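/- (Appendix A.1: the Riesz representer for the partially linear model is the L² projection of the inverse-propensity weight function.) Let (Ω, 𝒜, P) be a probability space, X a random element of a measurable space 𝒳, and D a {0,1}-valued random variable. Let e(X) be a version of the conditional expectation E[D | X] and assume ε₀ ≤ e(X) ≤ 1 − ε₀ almost surely for some ε₀ ∈ (0, 1/2). Let S := { b·D + g(X) : b ∈ ℝ, g: 𝒳 → ℝ measurable with E[g(X)²] < ∞ } ⊆ L²(P). Define γ_FULL := D/e(X) − (1 − D)/(1 − e(X)) and γ_PL := (D − e(X))/E[(D − e(X))²] (the denominator is positive since E[(D − e(X))²] = E[e(X)(1 − e(X))] ≥ ε₀(1 − ε₀) > 0). Then γ_PL ∈ S, and for every γ ∈ S, E[(γ_FULL − γ)²] ≥ E[(γ_FULL − γ_PL)²], with equality if and only if γ = γ_PL almost surely. -/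

import Mathlib

open MeasureTheory ProbabilityTheory


private lemma l2_mul_integrable {Ω : Type*} [MeasurableSpace Ω] {P : Measure Ω}
    {u v : Ω → ℝ} (hu : MemLp u 2 P) (hv : MemLp v 2 P) :
    Integrable (fun ω => u ω * v ω) P := by
  have h := hu.smul (r := 1) hv
  rw [memLp_one_iff_integrable] at h
  have he : (fun ω => u ω * v ω) = v • u := by funext ω; simp [mul_comm]
  rw [he]; exact h

private lemma l2_mul_bound {Ω : Type*} [MeasurableSpace Ω] {P : Measure Ω}
    {u v : Ω → ℝ} (hu : MemLp u 2 P) (hv : AEStronglyMeasurable v P) (C : ℝ)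
    (hC : ∀ᵐ ω ∂P, ‖v ω‖ ≤ C) : MemLp (fun ω => u ω * v ω) 2 P := by
  have hvtop : MemLp v ⊤ P := memLp_top_of_bound hv C hC
  have h := hu.smul (p := ⊤) (r := 2) hvtop
  have he : (fun ω => u ω * v ω) = v • u := by funext ω; simp [mul_comm]
  rw [he]; exact h

private lemma pull_out {Ω 𝒳 : Type*} [MeasurableSpace Ω] [MeasurableSpace 𝒳]
    {P : Measure Ω} [IsProbabilityMeasure P] {X : Ω → 𝒳} (hX : Measurable X)
    {D : Ω → ℝ} (hDint : Integrable D P)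
    {e : 𝒳 → ℝ}
    (he : (fun ω => e (X ω)) =ᵐ[P] P[D | MeasurableSpace.comap X inferInstance])
    {f : 𝒳 → ℝ} (hf : Measurable f)
    (hint : Integrable (fun ω => f (X ω) * D ω) P) :
    ∫ ω, f (X ω) * D ω ∂P = ∫ ω, f (X ω) * e (X ω) ∂P := by
  have hm : MeasurableSpace.comap X inferInstance ≤ ‹MeasurableSpace Ω› := hX.comap_le
  have hXm : Measurable[MeasurableSpace.comap X inferInstance] X := fun s hs => ⟨s, hs, rfl⟩
  have hsm : StronglyMeasurable[MeasurableSpace.comap X inferInstance] (fun ω => f (X ω)) :=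
    (hf.comp hXm).stronglyMeasurable
  have key : P[(fun ω => f (X ω)) * D | MeasurableSpace.comap X inferInstance]
      =ᵐ[P] (fun ω => f (X ω)) * P[D | MeasurableSpace.comap X inferInstance] :=
    condExp_mul_of_stronglyMeasurable_left hsm (by exact hint) hDint
  calc ∫ ω, f (X ω) * D ω ∂P
      = ∫ ω, (P[(fun ω => f (X ω)) * D | MeasurableSpace.comap X inferInstance]) ω ∂P := by
        exact (integral_condExp hm).symm
    _ = ∫ ω, ((fun ω => f (X ω)) * P[D | MeasurableSpace.comap X inferInstance]) ω ∂P :=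
        integral_congr_ae key
    _ = ∫ ω, f (X ω) * e (X ω) ∂P := by
        refine integral_congr_ae ?_
        filter_upwards [he] with ω hω
        simp only [Pi.mul_apply]
        rw [← hω]

/-- Appendix A.1: the Riesz representer for the partially linear model is
the L² projection of the inverse-propensity weight function. `γ_PL` belongs to the
partially linear class `S`, minimizes `E[(γ_FULL − γ)²]` over `S`, and is the a.s.-unique
minimizer. -/
theorem partially_linear_riesz_is_projection
    {Ω 𝒳 : Type*} [MeasurableSpace Ω] [MeasurableSpace 𝒳]
    (P : Measure Ω) [IsProbabilityMeasure P]
    (X : Ω → 𝒳) (hX : Measurable X)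
    (D : Ω → ℝ) (hD : Measurable D) (hD01 : ∀ ω, D ω = 0 ∨ D ω = 1)
    (e : 𝒳 → ℝ) (hemeas : Measurable e)
    (he : (fun ω => e (X ω)) =ᵐ[P] P[D | MeasurableSpace.comap X inferInstance])
    (ε₀ : ℝ) (hε₀ : ε₀ ∈ Set.Ioo (0 : ℝ) (1 / 2))
    (hebound : ∀ᵐ ω ∂P, ε₀ ≤ e (X ω) ∧ e (X ω) ≤ 1 - ε₀)
    (S : Set (Ω → ℝ))
    (hS : S = {γ : Ω → ℝ | ∃ (b : ℝ) (g : 𝒳 → ℝ), Measurable g ∧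
      MemLp (fun ω => g (X ω)) 2 P ∧ γ = fun ω => b * D ω + g (X ω)})
    (γF γPL : Ω → ℝ)
    (hγF : γF = fun ω => D ω / e (X ω) - (1 - D ω) / (1 - e (X ω)))
    (hγPL : γPL = fun ω => (D ω - e (X ω)) / ∫ ω', (D ω' - e (X ω')) ^ 2 ∂P) :
    γPL ∈ S ∧
    (∀ γ ∈ S, (∫ ω, (γF ω - γPL ω) ^ 2 ∂P) ≤ ∫ ω, (γF ω - γ ω) ^ 2 ∂P) ∧
    (∀ γ ∈ S, ((∫ ω, (γF ω - γ ω) ^ 2 ∂P) = ∫ ω, (γF ω - γPL ω) ^ 2 ∂P ↔ γ =ᵐ[P] γPL)) := by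
  obtain ⟨hε₀0, hε₀half⟩ := hε₀
  set V := ∫ ω', (D ω' - e (X ω')) ^ 2 ∂P with hV_def
  -- basic measurability / integrability facts
  have heX : Measurable fun ω => e (X ω) := hemeas.comp hX
  have hDb : ∀ ω, ‖D ω‖ ≤ 1 := by
    intro ω; rcases hD01 ω with h | h <;> simp [h]
  have hD2 : MemLp D 2 P := MemLp.of_bound hD.aestronglyMeasurable 1 (Filter.Eventually.of_forall hDb)
  have hDint : Integrable D P := hD2.integrable one_le_two
  have he2 : MemLp (fun ω => e (X ω)) 2 P := by
    refine MemLp.of_bound heX.aestronglyMeasurable 1 ?_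
    filter_upwards [hebound] with ω hω
    obtain ⟨h1, h2⟩ := hω
    rw [Real.norm_eq_abs, abs_le]; constructor <;> linarith
  have hsub2 : MemLp (fun ω => D ω - e (X ω)) 2 P := by
    have := hD2.sub he2
    exact this
  have hsqint : Integrable (fun ω => (D ω - e (X ω)) ^ 2) P := by
    have := l2_mul_integrable hsub2 hsub2
    simpa [pow_two] using this
  -- positivity of V
  have hVlb : 0 < V := by
    have hlb : (fun _ : Ω => ε₀ ^ 2) ≤ᵐ[P] fun ω => (D ω - e (X ω)) ^ 2 := by
      filter_upwards [hebound] with ω hω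
      obtain ⟨h1, h2⟩ := hω
      rcases hD01 ω with h | h <;> rw [h] <;> nlinarith
    have h := integral_mono_ae (integrable_const (ε₀ ^ 2)) hsqint hlb
    have h2 : (0:ℝ) < ε₀ ^ 2 := by positivity
    simp only [integral_const, measure_univ, ENNReal.toReal_one, probReal_univ, smul_eq_mul, one_mul] at h
    linarith
  have hVne : V ≠ 0 := ne_of_gt hVlb
  -- membership of γPL in L²
  have hγPL2 : MemLp γPL 2 P := by
    rw [hγPL]
    have h := hsub2.const_mul V⁻¹
    have he' : (fun ω => (D ω - e (X ω)) / V) = fun ω => V⁻¹ * (D ω - e (X ω)) := by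
      funext ω; ring
    rw [he']; exact h
  -- γF is bounded a.e. and in L²
  have hγFmeas : Measurable γF := by
    rw [hγF]
    exact (hD.div heX).sub ((measurable_const.sub hD).div (measurable_const.sub heX))
  have hγF2 : MemLp γF 2 P := by
    refine MemLp.of_bound hγFmeas.aestronglyMeasurable (1/ε₀) ?_
    filter_upwards [hebound] with ω hω
    obtain ⟨h1, h2⟩ := hω
    have he0 : (0:ℝ) < e (X ω) := lt_of_lt_of_le hε₀0 h1
    have he1 : (0:ℝ) < 1 - e (X ω) := by linarith
    rw [hγF, Real.norm_eq_abs]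
    rcases hD01 ω with h | h
    · have hv : (fun ω => D ω / e (X ω) - (1 - D ω) / (1 - e (X ω))) ω
          = -(1 / (1 - e (X ω))) := by simp only []; rw [h]; ring
      rw [hv, abs_neg, abs_of_pos (by positivity)]
      exact one_div_le_one_div_of_le hε₀0 (by linarith)
    · have hv : (fun ω => D ω / e (X ω) - (1 - D ω) / (1 - e (X ω))) ω
          = 1 / e (X ω) := by simp only []; rw [h]; ring
      rw [hv, abs_of_pos (by positivity)]
      exact one_div_le_one_div_of_le hε₀0 h1
  -- the pull-out identity
  have pull : ∀ f : 𝒳 → ℝ, Measurable f → Integrable (fun ω => f (X ω) * D ω) P →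
      ∫ ω, f (X ω) * D ω ∂P = ∫ ω, f (X ω) * e (X ω) ∂P :=
    fun f hf hint => pull_out hX hDint he hf hint
  -- ∫ (D - e) D = V
  have hDeD_int : Integrable (fun ω => (D ω - e (X ω)) * D ω) P := l2_mul_integrable hsub2 hD2
  have heD_int : Integrable (fun ω => e (X ω) * D ω) P := l2_mul_integrable he2 hD2
  have hee_int : Integrable (fun ω => e (X ω) * e (X ω)) P := l2_mul_integrable he2 he2
  have hI0 : ∫ ω, e (X ω) * D ω ∂P = ∫ ω, e (X ω) * e (X ω) ∂P :=
    pull e hemeas heD_int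
  have hDeD : ∫ ω, (D ω - e (X ω)) * D ω ∂P = V := by
    have hpt : ∀ ω, (D ω - e (X ω)) ^ 2 - (D ω - e (X ω)) * D ω
        = e (X ω) * e (X ω) - e (X ω) * D ω := by
      intro ω; rcases hD01 ω with h | h <;> rw [h] <;> ring
    have h1 : ∫ ω, ((D ω - e (X ω)) ^ 2 - (D ω - e (X ω)) * D ω) ∂P
        = ∫ ω, (e (X ω) * e (X ω) - e (X ω) * D ω) ∂P := by
      refine integral_congr_ae (Filter.Eventually.of_forall fun ω => hpt ω)
    rw [integral_sub hsqint hDeD_int, integral_sub hee_int heD_int] at h1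
    rw [hI0] at h1
    have : V - ∫ ω, (D ω - e (X ω)) * D ω ∂P = 0 := by rw [hV_def]; linarith
    linarith
  -- ∫ γF D = 1
  have hwb : ∀ᵐ ω ∂P, ‖1 / e (X ω)‖ ≤ 1/ε₀ := by
    filter_upwards [hebound] with ω hω
    obtain ⟨h1, h2⟩ := hω
    have he0 : (0:ℝ) < e (X ω) := lt_of_lt_of_le hε₀0 h1
    rw [Real.norm_eq_abs, abs_of_pos (by positivity)]
    exact one_div_le_one_div_of_le hε₀0 h1
  have hinvmeas : Measurable fun x => 1 / e x := measurable_const.div hemeas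
  have hinv2 : MemLp (fun ω => 1 / e (X ω)) 2 P :=
    MemLp.of_bound (hinvmeas.comp hX).aestronglyMeasurable (1/ε₀) hwb
  have hγFD : ∫ ω, γF ω * D ω ∂P = 1 := by
    have hpt : ∀ ω, γF ω * D ω = (1 / e (X ω)) * D ω := by
      intro ω; rw [hγF]; rcases hD01 ω with h | h <;> simp only [] <;> rw [h] <;> ring
    rw [integral_congr_ae (Filter.Eventually.of_forall hpt)]
    rw [pull _ hinvmeas (l2_mul_integrable hinv2 hD2)]
    have : ∫ ω, (1 / e (X ω)) * e (X ω) ∂P = ∫ _ω, (1:ℝ) ∂P := by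
      refine integral_congr_ae ?_
      filter_upwards [hebound] with ω hω
      obtain ⟨h1, _⟩ := hω
      have : e (X ω) ≠ 0 := ne_of_gt (lt_of_lt_of_le hε₀0 h1)
      field_simp
    rw [this]; simp
  -- ∫ γPL D = 1
  have hγPLD : ∫ ω, γPL ω * D ω ∂P = 1 := by
    have hpt : ∀ ω, γPL ω * D ω = ((D ω - e (X ω)) * D ω) / V := by
      intro ω; rw [hγPL]; simp only []; ring
    rw [integral_congr_ae (Filter.Eventually.of_forall hpt), integral_div, hDeD,
      div_self hVne]
  -- orthogonality to g(X)
  have horthg : ∀ g : 𝒳 → ℝ, Measurable g → MemLp (fun ω => g (X ω)) 2 P →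
      (∫ ω, γF ω * g (X ω) ∂P = 0) ∧ (∫ ω, γPL ω * g (X ω) ∂P = 0) := by
    intro g hg hg2
    constructor
    · -- γF part
      set ψ : 𝒳 → ℝ := fun x => g x * (1 / e x + 1 / (1 - e x)) with hψ_def
      have hψmeas : Measurable ψ :=
        hg.mul ((measurable_const.div hemeas).add (measurable_const.div (measurable_const.sub hemeas)))
      have hwmeas : Measurable fun ω => 1 / e (X ω) + 1 / (1 - e (X ω)) :=
        ((measurable_const.div hemeas).add (measurable_const.div (measurable_const.sub hemeas))).comp hX
      have hwb2 : ∀ᵐ ω ∂P, ‖1 / e (X ω) + 1 / (1 - e (X ω))‖ ≤ 2/ε₀ := by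
        filter_upwards [hebound] with ω hω
        obtain ⟨h1, h2⟩ := hω
        have he0 : (0:ℝ) < e (X ω) := lt_of_lt_of_le hε₀0 h1
        have he1 : (0:ℝ) < 1 - e (X ω) := by linarith
        have b1 : 1 / e (X ω) ≤ 1/ε₀ := one_div_le_one_div_of_le hε₀0 h1
        have b2 : 1 / (1 - e (X ω)) ≤ 1/ε₀ := one_div_le_one_div_of_le hε₀0 (by linarith)
        rw [Real.norm_eq_abs, abs_of_pos (by positivity)]
        have : (2:ℝ)/ε₀ = 1/ε₀ + 1/ε₀ := by ring
        rw [this]; exact add_le_add b1 b2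
      have hψ2 : MemLp (fun ω => ψ (X ω)) 2 P :=
        l2_mul_bound hg2 hwmeas.aestronglyMeasurable (2/ε₀) hwb2
      have hw1b : ∀ᵐ ω ∂P, ‖1 / (1 - e (X ω))‖ ≤ 1/ε₀ := by
        filter_upwards [hebound] with ω hω
        obtain ⟨h1, h2⟩ := hω
        have he1' : (0:ℝ) < 1 - e (X ω) := by linarith
        rw [Real.norm_eq_abs, abs_of_pos (by positivity)]
        exact one_div_le_one_div_of_le hε₀0 (by linarith)
      have hg1e2 : MemLp (fun ω => g (X ω) * (1 / (1 - e (X ω)))) 2 P :=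
        l2_mul_bound hg2 ((measurable_const.div (measurable_const.sub hemeas)).comp hX).aestronglyMeasurable
          (1/ε₀) hw1b
      have hpt : ∀ ω, γF ω * g (X ω)
          = ψ (X ω) * D ω - g (X ω) * (1 / (1 - e (X ω))) := by
        intro ω; rw [hγF, hψ_def]; rcases hD01 ω with h | h <;> simp only [] <;> rw [h] <;> ring
      rw [integral_congr_ae (Filter.Eventually.of_forall hpt)]
      rw [integral_sub (l2_mul_integrable hψ2 hD2) (hg1e2.integrable one_le_two)]
      rw [pull ψ hψmeas (l2_mul_integrable hψ2 hD2)]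
      have hcomb : ∫ ω, ψ (X ω) * e (X ω) ∂P = ∫ ω, g (X ω) * (1 / (1 - e (X ω))) ∂P := by
        refine integral_congr_ae ?_
        filter_upwards [hebound] with ω hω
        obtain ⟨h1, h2⟩ := hω
        have he0 : e (X ω) ≠ 0 := ne_of_gt (lt_of_lt_of_le hε₀0 h1)
        have he1 : (1:ℝ) - e (X ω) ≠ 0 := ne_of_gt (by linarith)
        rw [hψ_def]; simp only []
        field_simp
        ring
      rw [hcomb]; ring
    · -- γPL part
      have hgD_int : Integrable (fun ω => g (X ω) * D ω) P := l2_mul_integrable hg2 hD2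
      have hge_int : Integrable (fun ω => g (X ω) * e (X ω)) P := l2_mul_integrable hg2 he2
      have hgpull := pull g hg hgD_int
      have hpt : ∀ ω, γPL ω * g (X ω)
          = (g (X ω) * D ω - g (X ω) * e (X ω)) / V := by
        intro ω; rw [hγPL]; simp only []; ring
      rw [integral_congr_ae (Filter.Eventually.of_forall hpt), integral_div,
        integral_sub hgD_int hge_int, hgpull, sub_self, zero_div]
  -- conclusion part 1: membership
  have hmem : γPL ∈ S := by
    rw [hS]
    refine ⟨1/V, fun x => -(e x) / V, (hemeas.neg).div_const _, ?_, ?_⟩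
    · have h := he2.const_mul (-(V⁻¹))
      have he' : (fun ω => -(e (X ω)) / V) = fun ω => -(V⁻¹) * e (X ω) := by
        funext ω; ring
      rw [he']; exact h
    · rw [hγPL]; funext ω; ring
  -- orthogonality to all of S - γPL and Pythagoras
  have hA2 : MemLp (fun ω => γF ω - γPL ω) 2 P := by
    have := hγF2.sub hγPL2; exact this
  have hAD : ∫ ω, (γF ω - γPL ω) * D ω ∂P = 0 := by
    have hpt : ∀ ω, (γF ω - γPL ω) * D ω = γF ω * D ω - γPL ω * D ω := fun ω => by ring
    rw [integral_congr_ae (Filter.Eventually.of_forall hpt),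
      integral_sub (l2_mul_integrable hγF2 hD2) (l2_mul_integrable hγPL2 hD2),
      hγFD, hγPLD, sub_self]
  have horth : ∀ (b : ℝ) (g : 𝒳 → ℝ), Measurable g → MemLp (fun ω => g (X ω)) 2 P →
      ∫ ω, (γF ω - γPL ω) * (b * D ω + g (X ω)) ∂P = 0 := by
    intro b g hg hg2
    obtain ⟨hFg, hPLg⟩ := horthg g hg hg2
    have hAg : ∫ ω, (γF ω - γPL ω) * g (X ω) ∂P = 0 := by
      have hpt : ∀ ω, (γF ω - γPL ω) * g (X ω) = γF ω * g (X ω) - γPL ω * g (X ω) :=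
        fun ω => by ring
      rw [integral_congr_ae (Filter.Eventually.of_forall hpt),
        integral_sub (l2_mul_integrable hγF2 hg2) (l2_mul_integrable hγPL2 hg2),
        hFg, hPLg, sub_self]
    have hpt : ∀ ω, (γF ω - γPL ω) * (b * D ω + g (X ω))
        = b * ((γF ω - γPL ω) * D ω) + (γF ω - γPL ω) * g (X ω) := fun ω => by ring
    rw [integral_congr_ae (Filter.Eventually.of_forall hpt)]
    rw [integral_add ((l2_mul_integrable hA2 hD2).const_mul b) (l2_mul_integrable hA2 hg2)]
    rw [integral_const_mul, hAD, hAg]; ring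
  -- Pythagoras for arbitrary γ ∈ S
  have hpyth : ∀ γ ∈ S, (∫ ω, (γF ω - γ ω) ^ 2 ∂P)
      = (∫ ω, (γF ω - γPL ω) ^ 2 ∂P) + ∫ ω, (γ ω - γPL ω) ^ 2 ∂P := by
    intro γ hγS
    rw [hS] at hγS
    obtain ⟨b, g, hg, hg2, hγ⟩ := hγS
    have hγ2 : MemLp γ 2 P := by
      rw [hγ]
      have := (hD2.const_mul b).add hg2
      exact this
    have hB2 : MemLp (fun ω => γ ω - γPL ω) 2 P := by
      have := hγ2.sub hγPL2; exact this
    -- the difference γ - γPL is again of the form b' D + g'(X)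
    have hg'2 : MemLp (fun ω => g (X ω) + V⁻¹ * e (X ω)) 2 P := by
      have := hg2.add (he2.const_mul V⁻¹); exact this
    have hcross : ∫ ω, (γF ω - γPL ω) * (γ ω - γPL ω) ∂P = 0 := by
      have hpt : ∀ ω, (γF ω - γPL ω) * (γ ω - γPL ω)
          = (γF ω - γPL ω) * ((b - 1/V) * D ω + (g (X ω) + V⁻¹ * e (X ω))) := by
        intro ω; rw [hγ, hγPL]; simp only []; ring
      rw [integral_congr_ae (Filter.Eventually.of_forall hpt)]
      exact horth (b - 1/V) (fun x => g x + V⁻¹ * e x) (hg.add (hemeas.const_mul V⁻¹)) hg'2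
    have hsqA : Integrable (fun ω => (γF ω - γPL ω) ^ 2) P := by
      have := l2_mul_integrable hA2 hA2; simpa [pow_two] using this
    have hsqB : Integrable (fun ω => (γ ω - γPL ω) ^ 2) P := by
      have := l2_mul_integrable hB2 hB2; simpa [pow_two] using this
    have hABint : Integrable (fun ω => (γF ω - γPL ω) * (γ ω - γPL ω)) P :=
      l2_mul_integrable hA2 hB2
    have hpt : ∀ ω, (γF ω - γ ω) ^ 2
        = ((γF ω - γPL ω) ^ 2 + (γ ω - γPL ω) ^ 2)
          - 2 * ((γF ω - γPL ω) * (γ ω - γPL ω)) := fun ω => by ring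
    rw [integral_congr_ae (Filter.Eventually.of_forall hpt)]
    have hsum : Integrable (fun ω => (γF ω - γPL ω) ^ 2 + (γ ω - γPL ω) ^ 2) P :=
      hsqA.add hsqB
    rw [integral_sub hsum (hABint.const_mul 2),
      integral_add hsqA hsqB, integral_const_mul, hcross]
    ring
  refine ⟨hmem, ?_, ?_⟩
  · intro γ hγS
    rw [hpyth γ hγS]
    have : 0 ≤ ∫ ω, (γ ω - γPL ω) ^ 2 ∂P :=
      integral_nonneg fun ω => sq_nonneg _
    linarith
  · intro γ hγS
    have hBsq := hpyth γ hγS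
    -- need integrability of (γ - γPL)^2 again
    rw [hS] at hγS
    obtain ⟨b, g, hg, hg2, hγ⟩ := hγS
    have hγ2 : MemLp γ 2 P := by
      rw [hγ]
      have := (hD2.const_mul b).add hg2
      exact this
    have hB2 : MemLp (fun ω => γ ω - γPL ω) 2 P := by
      have := hγ2.sub hγPL2; exact this
    have hsqB : Integrable (fun ω => (γ ω - γPL ω) ^ 2) P := by
      have := l2_mul_integrable hB2 hB2; simpa [pow_two] using this
    constructor
    · intro heq
      have h0 : ∫ ω, (γ ω - γPL ω) ^ 2 ∂P = 0 := by linarith [hBsq, heq.symm ▸ hBsq]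
      have := (integral_eq_zero_iff_of_nonneg_ae
        (Filter.Eventually.of_forall fun ω => sq_nonneg (γ ω - γPL ω)) hsqB).mp h0
      filter_upwards [this] with ω hω
      have : (γ ω - γPL ω) ^ 2 = 0 := hω
      have := pow_eq_zero_iff (n := 2) (by norm_num) |>.mp this
      linarith [this]
    · intro haeq
      refine integral_congr_ae ?_
      filter_upwards [haeq] with ω hω
      rw [hω]
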